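/- (Structure Theorem for C-decompositions) Let L_1, ..., L_l be the linkage classes of a chemical reaction network N. A decomposition N = N_1 ∪ ... ∪ N_k is a C-decomposition if and only if each subnetwork N_i is a union of linkage classes and each linkage class is contained in exactly one N_i; in other words, the linkage class decomposition is a refinement of the given decomposition. -/

import Mathlib

open scoped Classical

noncomputable section

/-- A reaction: an ordered pair (reactant complex, product complex) of vectors in ℝ^S. -/
abbrev Rxn (S : Type*) := (S → ℝ) × (S → ℝ)

variable {S : Type*} [Fintype S]

/-- The set of complexes occurring in a reaction set. -/
def complexesOf (R : Finset (Rxn S)) : Finset (S → ℝ) :=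
  R.image Prod.fst ∪ R.image Prod.snd

/-- `(C, R)` is a chemical reaction network on the species set `S`:
complexes have nonnegative integer coordinates, reactions go between complexes,
no reaction is a loop, and every complex occurs in at least one reaction. -/
def IsCRN (C : Finset (S → ℝ)) (R : Finset (Rxn S)) : Prop :=
  C.Nonempty ∧ R.Nonempty ∧
  (∀ y ∈ C, ∀ s, ∃ n : ℕ, y s = (n : ℝ)) ∧
  (∀ r ∈ R, r.1 ∈ C ∧ r.2 ∈ C) ∧
  (∀ r ∈ R, r.1 ≠ r.2) ∧
  (∀ y ∈ C, ∃ r ∈ R, r.1 = y ∨ r.2 = y)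

/-- The stoichiometric subspace `span {y' - y : (y, y') ∈ R}`. -/
def stoichSubspace (R : Finset (Rxn S)) : Submodule ℝ (S → ℝ) :=
  Submodule.span ℝ ((fun r : Rxn S => r.2 - r.1) '' ↑R)

/-- The rank `s = dim S` of the network. -/
def crnRank (R : Finset (Rxn S)) : ℕ := Module.finrank ℝ (stoichSubspace R)

/-- The standard basis vector `ω_y` of the complex space `ℝ^C` (realized inside
the space of real-valued functions on complexes). -/
def omegaC (y : S → ℝ) : (S → ℝ) → ℝ := fun z => if z = y then 1 else 0

/-- The image of the incidence map `I_a`, i.e. the span of the vectors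
`ω_{y'} - ω_y` over reactions `y → y'`. -/
def incImage (R : Finset (Rxn S)) : Submodule ℝ ((S → ℝ) → ℝ) :=
  Submodule.span ℝ ((fun r : Rxn S => omegaC r.2 - omegaC r.1) '' ↑R)

/-- The underlying undirected graph of `(C, R)`, on the complexes occurring in `R`. -/
def linkGraph (R : Finset (Rxn S)) : SimpleGraph {y : S → ℝ // y ∈ complexesOf R} where
  Adj a b := a ≠ b ∧ ((a.1, b.1) ∈ R ∨ (b.1, a.1) ∈ R)
  symm := ⟨fun a b h => ⟨h.1.symm, h.2.symm⟩⟩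
  loopless := ⟨fun a h => h.1 rfl⟩

/-- `n`, the number of complexes. -/
def numComplexes (R : Finset (Rxn S)) : ℕ := (complexesOf R).card

/-- `l`, the number of linkage classes (connected components of the
underlying undirected graph). -/
def numLinkageClasses (R : Finset (Rxn S)) : ℕ :=
  Nat.card (linkGraph R).ConnectedComponent

/-- The deficiency `δ = n - l - s` (as an integer). -/
def deficiency (R : Finset (Rxn S)) : ℤ :=
  (numComplexes R : ℤ) - (numLinkageClasses R : ℤ) - (crnRank R : ℤ)

/-- A covering of the reaction set `R`: a family of subsets of `R` whose union is `R`. -/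
def IsCovering {ι : Type*} (R : Finset (Rxn S)) (f : ι → Finset (Rxn S)) : Prop :=
  (∀ i, f i ⊆ R) ∧ ∀ r ∈ R, ∃ i, r ∈ f i

/-- A decomposition of the reaction set `R`: a partition of `R` into nonempty subsets. -/
def IsDecomposition {ι : Type*} (R : Finset (Rxn S)) (f : ι → Finset (Rxn S)) : Prop :=
  (∀ i, (f i).Nonempty) ∧ (Pairwise fun i j => Disjoint (f i) (f j)) ∧
  (∀ i, f i ⊆ R) ∧ (∀ r ∈ R, ∃ i, r ∈ f i)

/-- Independence: the stoichiometric subspace is the direct sum of those of the subnetworks. -/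
def IsIndependent {ι : Type*} (R : Finset (Rxn S)) (f : ι → Finset (Rxn S)) : Prop :=
  (⨆ i, stoichSubspace (f i)) = stoichSubspace R ∧
  iSupIndep fun i => stoichSubspace (f i)

/-- Incidence independence: the image of the incidence map is the direct sum of the
images of the incidence maps of the subnetworks. -/
def IsIncidenceIndependent {ι : Type*} (R : Finset (Rxn S)) (f : ι → Finset (Rxn S)) : Prop :=
  (⨆ i, incImage (f i)) = incImage R ∧
  iSupIndep fun i => incImage (f i)

/-- A `𝒞`-decomposition: the complex sets of the subnetworks are pairwise disjoint. -/
def CDisjoint {ι : Type*} (f : ι → Finset (Rxn S)) : Prop :=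
  Pairwise fun i j => Disjoint (complexesOf (f i)) (complexesOf (f j))

/-- The set of nonzero complexes of a reaction set. -/
def nonzeroComplexesOf (R : Finset (Rxn S)) : Finset (S → ℝ) := (complexesOf R).erase 0

/-- A `𝒞*`-decomposition: the sets of nonzero complexes are pairwise disjoint. -/
def CstarDisjoint {ι : Type*} (f : ι → Finset (Rxn S)) : Prop :=
  Pairwise fun i j => Disjoint (nonzeroComplexesOf (f i)) (nonzeroComplexesOf (f j))

/-- A coarsening: each block of `f` is contained in exactly one block of `g`. -/
def IsCoarsening {ι κ : Type*} (f : ι → Finset (Rxn S)) (g : κ → Finset (Rxn S)) : Prop :=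
  ∀ i, ∃! j, f i ⊆ g j

/-- Undirected reachability in the graph `(C, R)`. -/
def undirReach (R : Finset (Rxn S)) : (S → ℝ) → (S → ℝ) → Prop :=
  Relation.ReflTransGen fun y z => (y, z) ∈ R ∨ (z, y) ∈ R

/-- Directed reachability in the digraph `(C, R)`. -/
def dirReach (R : Finset (Rxn S)) : (S → ℝ) → (S → ℝ) → Prop :=
  Relation.ReflTransGen fun y z => (y, z) ∈ R

/-- Weak reversibility: every connected component of the directed graph `(C, R)`
is strongly connected. -/
def WeaklyReversible (R : Finset (Rxn S)) : Prop :=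
  ∀ y z, undirReach R y z → dirReach R y z

/-- The set of complex balanced equilibria `Z₊(N, K)` of a kinetics `K` on the
(sub)network with reaction set `R`: positive vectors `x` with `I_a K(x) = 0`. -/
def Zplus (R : Finset (Rxn S)) (K : (S → ℝ) → Rxn S → ℝ) : Set (S → ℝ) :=
  {x | (∀ s, 0 < x s) ∧ ∑ r ∈ R, K x r • (omegaC r.2 - omegaC r.1) = 0}

/-- The reactions lying in the linkage class of the zero complex. -/
def zeroLinkReactions (R : Finset (Rxn S)) : Finset (Rxn S) :=
  R.filter fun r => undirReach R 0 r.1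

/-- The reaction set of the linkage class `c`: all reactions whose complexes lie in `c`. -/
def lcReactions (R : Finset (Rxn S)) (c : (linkGraph R).ConnectedComponent) :
    Finset (Rxn S) :=
  R.filter fun r => ∃ h : r.1 ∈ complexesOf R, (linkGraph R).connectedComponentMk ⟨r.1, h⟩ = c

/-- The network has independent linkage classes (ILC): the linkage class
decomposition is independent. -/
def HasILC (R : Finset (Rxn S)) : Prop := IsIndependent R (lcReactions R)


lemma mem_complexesOf_fst {R : Finset (Rxn S)} {r : Rxn S} (h : r ∈ R) :
    r.1 ∈ complexesOf R := by
  simp only [complexesOf, Finset.mem_union, Finset.mem_image]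
  exact Or.inl ⟨r, h, rfl⟩

lemma mem_complexesOf_snd {R : Finset (Rxn S)} {r : Rxn S} (h : r ∈ R) :
    r.2 ∈ complexesOf R := by
  simp only [complexesOf, Finset.mem_union, Finset.mem_image]
  exact Or.inr ⟨r, h, rfl⟩

lemma mem_complexesOf_iff {R : Finset (Rxn S)} {y : S → ℝ} :
    y ∈ complexesOf R ↔ ∃ r ∈ R, r.1 = y ∨ r.2 = y := by
  simp only [complexesOf, Finset.mem_union, Finset.mem_image]
  constructor
  · rintro (⟨r, hr, h⟩ | ⟨r, hr, h⟩)
    · exact ⟨r, hr, Or.inl h⟩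
    · exact ⟨r, hr, Or.inr h⟩
  · rintro ⟨r, hr, h | h⟩
    · exact Or.inl ⟨r, hr, h⟩
    · exact Or.inr ⟨r, hr, h⟩

lemma complexesOf_mono {R1 R2 : Finset (Rxn S)} (h : R1 ⊆ R2) :
    complexesOf R1 ⊆ complexesOf R2 :=
  Finset.union_subset_union (Finset.image_subset_image h) (Finset.image_subset_image h)

lemma block_eq {k : ℕ} {R : Finset (Rxn S)} {f : Fin k → Finset (Rxn S)}
    (hdec : IsDecomposition R f) {r : Rxn S} {a b : Fin k}
    (ha : r ∈ f a) (hb : r ∈ f b) : a = b := by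
  by_contra h
  exact Finset.disjoint_left.mp (hdec.2.1 h) ha hb

lemma comp_fst_eq_snd {C : Finset (S → ℝ)} {R : Finset (Rxn S)} (hcrn : IsCRN C R)
    {r : Rxn S} (hr : r ∈ R) (h1 : r.1 ∈ complexesOf R) (h2 : r.2 ∈ complexesOf R) :
    (linkGraph R).connectedComponentMk ⟨r.1, h1⟩ =
      (linkGraph R).connectedComponentMk ⟨r.2, h2⟩ := by
  have hne := hcrn.2.2.2.2.1 r hr
  have hadj : (linkGraph R).Adj ⟨r.1, h1⟩ ⟨r.2, h2⟩ :=
    ⟨fun h => hne (congrArg Subtype.val h), Or.inl hr⟩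
  exact SimpleGraph.ConnectedComponent.sound hadj.reachable

lemma keyA {k : ℕ} {R : Finset (Rxn S)} {f : Fin k → Finset (Rxn S)}
    (hC : CDisjoint f) (hdec : IsDecomposition R f) (i : Fin k)
    {a b : {y : S → ℝ // y ∈ complexesOf R}}
    (hr : (linkGraph R).Reachable a b) (ha : a.1 ∈ complexesOf (f i)) :
    b.1 ∈ complexesOf (f i) := by
  rw [SimpleGraph.reachable_iff_reflTransGen] at hr
  induction hr with
  | refl => exact ha
  | @tail c b _ hadj ih =>
    have blk : ∀ j : Fin k, c.1 ∈ complexesOf (f j) → j = i := by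
      intro j hcj
      by_contra hne
      exact Finset.disjoint_left.mp (hC hne) hcj ih
    rcases hadj.2 with h1 | h1
    · obtain ⟨j, hj⟩ := hdec.2.2.2 _ h1
      have hc : c.1 ∈ complexesOf (f j) := mem_complexesOf_fst hj
      rw [blk j hc] at hj
      exact mem_complexesOf_snd hj
    · obtain ⟨j, hj⟩ := hdec.2.2.2 _ h1
      have hc : c.1 ∈ complexesOf (f j) := mem_complexesOf_snd hj
      rw [blk j hc] at hj
      exact mem_complexesOf_fst hj

lemma lc_nonempty {C : Finset (S → ℝ)} {R : Finset (Rxn S)} (hcrn : IsCRN C R)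
    (c : (linkGraph R).ConnectedComponent) : (lcReactions R c).Nonempty := by
  obtain ⟨a, rfl⟩ := Quot.exists_rep c
  obtain ⟨r, hrR, hor⟩ := mem_complexesOf_iff.mp a.2
  refine ⟨r, Finset.mem_filter.mpr ⟨hrR, mem_complexesOf_fst hrR, ?_⟩⟩
  rcases hor with h | h
  · exact congrArg _ (Subtype.ext h)
  · exact (comp_fst_eq_snd hcrn hrR _ (mem_complexesOf_snd hrR)).trans
      (congrArg _ (Subtype.ext h))

/-- Structure Theorem for C-decompositions: a decomposition is a
C-decomposition iff each subnetwork is a union of linkage classes and each linkage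
class is contained in exactly one subnetwork (the linkage class decomposition is a
refinement of the given decomposition). -/
theorem stmt_7 (C : Finset (S → ℝ)) (R : Finset (Rxn S)) {k : ℕ}
    (f : Fin k → Finset (Rxn S)) (hcrn : IsCRN C R) (hdec : IsDecomposition R f) :
    CDisjoint f ↔
      ((∀ i, ∃ T : Set (linkGraph R).ConnectedComponent,
          f i = R.filter fun r =>
            ∃ h : r.1 ∈ complexesOf R, (linkGraph R).connectedComponentMk ⟨r.1, h⟩ ∈ T) ∧
        ∀ c : (linkGraph R).ConnectedComponent, ∃! i, lcReactions R c ⊆ f i) := by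
  constructor
  · intro hC
    constructor
    · intro i
      refine ⟨{c | ∃ r ∈ f i, ∃ h : r.1 ∈ complexesOf R,
        (linkGraph R).connectedComponentMk ⟨r.1, h⟩ = c}, ?_⟩
      ext r
      simp only [Finset.mem_filter, Set.mem_setOf_eq]
      constructor
      · intro hr
        have hrR : r ∈ R := hdec.2.2.1 i hr
        exact ⟨hrR, mem_complexesOf_fst hrR, r, hr, mem_complexesOf_fst hrR, rfl⟩
      · rintro ⟨hrR, h, r', hr', h', heq⟩
        have hreach : (linkGraph R).Reachable ⟨r'.1, h'⟩ ⟨r.1, h⟩ :=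
          SimpleGraph.ConnectedComponent.exact heq
        have h1 : r.1 ∈ complexesOf (f i) :=
          keyA hC hdec i hreach (mem_complexesOf_fst hr')
        obtain ⟨j, hj⟩ := hdec.2.2.2 _ hrR
        have : j = i := by
          by_contra hne
          exact Finset.disjoint_left.mp (hC hne) (mem_complexesOf_fst hj) h1
        rwa [this] at hj
    · intro c
      obtain ⟨r, hr⟩ := lc_nonempty hcrn c
      obtain ⟨hrR, h, hc⟩ := Finset.mem_filter.mp hr
      obtain ⟨j, hj⟩ := hdec.2.2.2 _ hrR
      refine ⟨j, ?_, ?_⟩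
      · intro r' hr'
        obtain ⟨hr'R, h', hc'⟩ := Finset.mem_filter.mp hr'
        have hreach : (linkGraph R).Reachable ⟨r.1, h⟩ ⟨r'.1, h'⟩ :=
          SimpleGraph.ConnectedComponent.exact (hc.trans hc'.symm)
        have h1 : r'.1 ∈ complexesOf (f j) :=
          keyA hC hdec j hreach (mem_complexesOf_fst hj)
        obtain ⟨j', hj'⟩ := hdec.2.2.2 _ hr'R
        have : j' = j := by
          by_contra hne
          exact Finset.disjoint_left.mp (hC hne) (mem_complexesOf_fst hj') h1
        rwa [this] at hj'
      · intro j' hj'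
        exact block_eq hdec (hj' hr) hj
  · rintro ⟨-, huniq⟩
    intro i j hij
    rw [Finset.disjoint_left]
    intro y hyi hyj
    obtain ⟨r, hrfi, hory⟩ := mem_complexesOf_iff.mp hyi
    obtain ⟨r', hr'fj, hory'⟩ := mem_complexesOf_iff.mp hyj
    have hrR : r ∈ R := hdec.2.2.1 i hrfi
    have hr'R : r' ∈ R := hdec.2.2.1 j hr'fj
    have hy : y ∈ complexesOf R := complexesOf_mono (hdec.2.2.1 i) hyi
    have hcompy : ∀ (s : Rxn S), s ∈ R → s.1 = y ∨ s.2 = y →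
        ∀ h1 : s.1 ∈ complexesOf R,
        (linkGraph R).connectedComponentMk ⟨s.1, h1⟩ =
          (linkGraph R).connectedComponentMk ⟨y, hy⟩ := by
      rintro s hsR (h | h) h1
      · exact congrArg _ (Subtype.ext h)
      · exact (comp_fst_eq_snd hcrn hsR h1 (mem_complexesOf_snd hsR)).trans
          (congrArg _ (Subtype.ext h))
    set c := (linkGraph R).connectedComponentMk ⟨y, hy⟩ with hcdef
    have hrlc : r ∈ lcReactions R c :=
      Finset.mem_filter.mpr ⟨hrR, mem_complexesOf_fst hrR, hcompy r hrR hory _⟩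
    have hr'lc : r' ∈ lcReactions R c :=
      Finset.mem_filter.mpr ⟨hr'R, mem_complexesOf_fst hr'R, hcompy r' hr'R hory' _⟩
    obtain ⟨i0, hsub, hu⟩ := huniq c
    have hi : i = i0 := block_eq hdec hrfi (hsub hrlc)
    have hj : j = i0 := block_eq hdec hr'fj (hsub hr'lc)
    exact hij (hi.trans hj.symm)

end
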